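/- arXiv:2308.03752 — 2 statements merged into one kernel-verified Lean document; each statement's English description precedes it below -/
import Mathlib

section
/- For any Euclidean lattice L in ℝⁿ one has syst(L) ≤ 2·(covol(L)/νₙ)^(1/n), where syst(L) is the minimum Euclidean norm of a nonzero element of L and νₙ is the Lebesgue measure of the n-dimensional Euclidean unit ball. -/
open MeasureTheory

lemma fund_vol_aux (n : ℕ) (b : Module.Basis (Fin n) ℝ (EuclideanSpace ℝ (Fin n))) :
    volume (ZSpan.fundamentalDomain b) =
      ENNReal.ofReal |(Matrix.of fun i j => b j i).det| := by
  classical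
  set b₀ : Module.Basis (Fin n) ℝ (EuclideanSpace ℝ (Fin n)) :=
    (EuclideanSpace.basisFun (Fin n) ℝ).toBasis with hb₀
  rw [ZSpan.measure_fundamentalDomain b volume b₀]
  have h1 : volume (ZSpan.fundamentalDomain b₀) = 1 := by
    have hset : ZSpan.fundamentalDomain b₀ =
        (MeasurableEquiv.toLp 2 (Fin n → ℝ)).symm ⁻¹'
          (Set.pi Set.univ fun _ : Fin n => Set.Ico (0 : ℝ) 1) := by
      ext x
      simp [ZSpan.fundamentalDomain, hb₀,
        Set.mem_pi]
    rw [hset, (EuclideanSpace.volume_preserving_symm_measurableEquiv_toLp (Fin n)).measure_preimage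
      (MeasurableSet.univ_pi fun _ => measurableSet_Ico).nullMeasurableSet]
    simp [volume_pi, Measure.pi_pi]
  have h2 : b₀.det ⇑b = (Matrix.of fun i j => b j i).det := by
    rw [Module.Basis.det_apply]
    congr 1
  rw [h1, h2, mul_one]

/-- **Hermite–Minkowski bound.** For a Euclidean lattice `L = ℤx₁ ⊕ ⋯ ⊕ ℤxₙ ⊆ ℝⁿ`,
`syst(L) ≤ 2 (covol(L) / νₙ)^(1/n)`, where `syst(L)` is the minimal norm of a nonzero
lattice vector, `covol(L) = |det(x₁ | ⋯ | xₙ)|`, and `νₙ` is the volume of the unit ball. -/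
theorem stmt1 (n : ℕ) (b : Module.Basis (Fin n) ℝ (EuclideanSpace ℝ (Fin n))) :
    sInf {r : ℝ | ∃ x ∈ Submodule.span ℤ (Set.range ⇑b), x ≠ 0 ∧ ‖x‖ = r} ≤
      2 * (|(Matrix.of fun i j => b j i).det| /
        (volume (Metric.ball (0 : EuclideanSpace ℝ (Fin n)) 1)).toReal) ^ ((1 : ℝ) / n) := by
  rcases Nat.eq_zero_or_pos n with hn | hn
  · subst hn
    have hempty : {r : ℝ | ∃ x ∈ Submodule.span ℤ (Set.range ⇑b),
        x ≠ 0 ∧ ‖x‖ = r} = ∅ := by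
      ext r
      simp only [Set.mem_setOf_eq, Set.mem_empty_iff_false, iff_false, not_exists]
      rintro x ⟨hx, hx0, rfl⟩
      exact hx0 (Subsingleton.elim x 0)
    rw [hempty, Real.sInf_empty]
    positivity
  · haveI : Nonempty (Fin n) := Fin.pos_iff_nonempty.mp hn
    set E := EuclideanSpace ℝ (Fin n)
    set ν : ENNReal := volume (Metric.ball (0 : E) 1) with hν
    set d : ℝ := |(Matrix.of fun i j => b j i).det| with hd
    have hν0 : ν ≠ 0 := (Metric.measure_ball_pos volume 0 one_pos).ne'
    have hνtop : ν ≠ ⊤ := measure_ball_lt_top.ne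
    have hνt : 0 < ν.toReal := ENNReal.toReal_pos hν0 hνtop
    have hF := fund_vol_aux n b
    have hd0 : 0 < d := by
      by_contra h
      push_neg at h
      have : ENNReal.ofReal d = 0 := ENNReal.ofReal_eq_zero.mpr h
      exact ZSpan.measure_fundamentalDomain_ne_zero b (hF.trans this)
    set R : ℝ := (d / ν.toReal) ^ ((1 : ℝ) / n) with hR
    have hR0 : 0 ≤ R := Real.rpow_nonneg (by positivity) _
    have hRn : R ^ n = d / ν.toReal := by
      rw [hR, ← Real.rpow_natCast (_ ^ _) n, ← Real.rpow_mul (by positivity),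
        one_div, inv_mul_cancel₀ (by exact_mod_cast hn.ne'), Real.rpow_one]
    have hfin : Module.finrank ℝ E = n := finrank_euclideanSpace_fin
    have hvol : volume (ZSpan.fundamentalDomain b) * 2 ^ Module.finrank ℝ E ≤
        volume (Metric.closedBall (0 : E) (2 * R)) := by
      rw [Measure.addHaar_closedBall volume 0 (by positivity), hfin, hF, ← hν]
      have : ENNReal.ofReal ((2 * R) ^ n) =
          2 ^ n * ENNReal.ofReal (R ^ n) := by
        rw [mul_pow, ENNReal.ofReal_mul (by positivity), ENNReal.ofReal_pow zero_le_two]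
        norm_num
      rw [this, hRn, ENNReal.ofReal_div_of_pos hνt, ENNReal.ofReal_toReal hνtop,
        mul_assoc, ENNReal.div_mul_cancel hν0 hνtop, mul_comm]
    haveI : Countable (Submodule.span ℤ (Set.range ⇑b)).toAddSubgroup :=
      inferInstanceAs <| Countable (Submodule.span ℤ (Set.range ⇑b))
    obtain ⟨x, hx0, hx⟩ :=
      exists_ne_zero_mem_lattice_of_measure_mul_two_pow_le_measure
        (ZSpan.isAddFundamentalDomain' b volume)
        (fun y hy => by simpa using hy)
        (convex_closedBall _ _) (isCompact_closedBall _ _) hvol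
    have hxnorm : ‖(x : E)‖ ≤ 2 * R := by
      simpa using Metric.mem_closedBall.mp hx
    refine le_trans (csInf_le ⟨0, fun r hr => ?_⟩ ?_) hxnorm
    · obtain ⟨y, -, -, rfl⟩ := hr
      exact norm_nonneg y
    · refine ⟨(x : E), x.2, ?_, rfl⟩
      simpa using hx0
end

section
/- Let L be a Euclidean lattice in ℝⁿ, let v ∈ L be a nonzero vector of minimal Euclidean norm (so ‖v‖ = syst(L)), and let p : ℝⁿ → v^⊥ be the orthogonal projection onto the orthogonal complement of v. Then every nonzero element of the projected lattice p(L) has norm at least (√3/2)·syst(L); that is, for every x ∈ L with p(x) ≠ 0, ‖p(x)‖ ≥ (√3/2)·‖v‖. -/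
open scoped RealInnerProductSpace

set_option maxHeartbeats 800000 in
/-- **Projection of a lattice along a shortest vector.**
Let `L = ℤx₁ ⊕ ⋯ ⊕ ℤxₙ` be a Euclidean lattice in `ℝⁿ`, let `v ∈ L` be a nonzero vector
of minimal norm (`‖v‖ = syst(L)`), and let `p` be the orthogonal projection onto the
orthogonal complement `v^⊥` of `v`. Then every nonzero projection `p(x)` of a lattice
point `x ∈ L` satisfies `‖p(x)‖ ≥ (√3/2)·‖v‖`. -/
theorem stmt19 (n : ℕ) (b : Module.Basis (Fin n) ℝ (EuclideanSpace ℝ (Fin n)))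
    (v : EuclideanSpace ℝ (Fin n)) (hv : v ∈ Submodule.span ℤ (Set.range ⇑b)) (hv0 : v ≠ 0)
    (hmin : ∀ x ∈ Submodule.span ℤ (Set.range ⇑b), x ≠ 0 → ‖v‖ ≤ ‖x‖) :
    ∀ x ∈ Submodule.span ℤ (Set.range ⇑b),
      Submodule.orthogonalProjectionOnto (ℝ ∙ v)ᗮ x ≠ 0 →
        Real.sqrt 3 / 2 * ‖v‖ ≤ ‖Submodule.orthogonalProjectionOnto (ℝ ∙ v)ᗮ x‖ := by
  intro x hx hpx
  have hvnorm : (0:ℝ) < ‖v‖ := norm_pos_iff.mpr hv0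
  set t : ℝ := ⟪v, x⟫ / ‖v‖ ^ 2 with ht
  set k : ℤ := round t with hk
  set x' : EuclideanSpace ℝ (Fin n) := x - (k : ℝ) • v with hx'
  have hx'mem : x' ∈ Submodule.span ℤ (Set.range ⇑b) := by
    rw [hx', Int.cast_smul_eq_zsmul]
    exact Submodule.sub_mem _ hx (Submodule.smul_mem _ k hv)
  have hpv : Submodule.orthogonalProjectionOnto (ℝ ∙ v)ᗮ v = 0 :=
    Submodule.orthogonalProjectionOnto_orthogonal_apply_eq_zero
      (Submodule.mem_span_singleton_self v)
  have hpx' : Submodule.orthogonalProjectionOnto (ℝ ∙ v)ᗮ x' = Submodule.orthogonalProjectionOnto (ℝ ∙ v)ᗮ x := by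
    simp [hx', map_sub, map_smul, hpv]
  have hx'0 : x' ≠ 0 := by
    intro h
    apply hpx
    rw [← hpx', h, map_zero]
  have hnorm : ‖v‖ ≤ ‖x'‖ := hmin x' hx'mem hx'0
  have hpyth := Submodule.norm_sq_eq_add_norm_sq_projection x'
    ((ℝ ∙ v) : Submodule ℝ (EuclideanSpace ℝ (Fin n)))
  simp only [Submodule.coe_norm] at hpyth
  have hq : (Submodule.orthogonalProjectionOnto (ℝ ∙ v) x' : EuclideanSpace ℝ (Fin n)) = (t - k) • v := by
    rw [← Submodule.starProjection_apply, Submodule.starProjection_singleton]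
    congr 1
    have hinner : ⟪v, x'⟫ = ⟪v, x⟫ - (k : ℝ) * ⟪v, v⟫ := by
      rw [hx', inner_sub_right, real_inner_smul_right]
    rw [hinner, real_inner_self_eq_norm_sq]
    simp only [RCLike.ofReal_real_eq_id, id_eq, ht]
    field_simp [ht]
  have hqnorm : ‖(Submodule.orthogonalProjectionOnto (ℝ ∙ v) x' : EuclideanSpace ℝ (Fin n))‖ ≤ ‖v‖ / 2 := by
    rw [hq, norm_smul]
    have h1 : |t - (k:ℝ)| ≤ 1/2 := abs_sub_round t
    calc ‖(t - (k:ℝ))‖ * ‖v‖ ≤ (1/2) * ‖v‖ := by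
          apply mul_le_mul_of_nonneg_right _ (norm_nonneg v)
          rwa [Real.norm_eq_abs]
      _ = ‖v‖ / 2 := by ring
  have h2 : ‖v‖^2 ≤ ‖x'‖^2 := pow_le_pow_left₀ (norm_nonneg v) hnorm 2
  have h4 : ‖(Submodule.orthogonalProjectionOnto (ℝ ∙ v) x' : EuclideanSpace ℝ (Fin n))‖^2 ≤ ‖v‖^2 / 4 := by
    nlinarith [norm_nonneg (Submodule.orthogonalProjectionOnto (ℝ ∙ v) x' : EuclideanSpace ℝ (Fin n))]
  have key : (3/4 : ℝ) * ‖v‖^2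
      ≤ ‖(Submodule.orthogonalProjectionOnto (ℝ ∙ v)ᗮ x' : EuclideanSpace ℝ (Fin n))‖^2 := by
    linarith
  have h5 : (Real.sqrt 3 / 2 * ‖v‖)^2
      ≤ ‖(Submodule.orthogonalProjectionOnto (ℝ ∙ v)ᗮ x' : EuclideanSpace ℝ (Fin n))‖^2 := by
    rw [mul_pow, div_pow, Real.sq_sqrt (by norm_num : (0:ℝ) ≤ 3)]
    linarith
  have h6 := Real.sqrt_le_sqrt h5
  rw [Real.sqrt_sq (by positivity), Real.sqrt_sq (norm_nonneg _)] at h6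
  rw [← hpx']
  simpa using h6
end
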